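/- If f : (0,∞) → (0,∞) satisfies (1-z)·f(x) = f(f(xz)·(1-z)/z) for all x > 0 and 0 < z < 1, and f(u₀) = u₀ for some u₀ > 0, then f(x) = x for all x > 0. -/

import Mathlib

theorem stmt3 (f : ℝ → ℝ) (hpos : ∀ x : ℝ, 0 < x → 0 < f x)
    (heq : ∀ x : ℝ, 0 < x → ∀ z : ℝ, 0 < z → z < 1 →
      (1 - z) * f x = f (f (x * z) * ((1 - z) / z)))
    (u₀ : ℝ) (hu₀ : 0 < u₀) (hfix : f u₀ = u₀) :
    ∀ x : ℝ, 0 < x → f x = x := by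
  -- Key reformulation: (b/(a+b)) * f (a+b) = f (f a * (b/a))
  have star : ∀ a b : ℝ, 0 < a → 0 < b →
      (b / (a + b)) * f (a + b) = f (f a * (b / a)) := by
    intro a b ha hb
    have hab : (0:ℝ) < a + b := by linarith
    have hz1 : (0:ℝ) < a / (a + b) := by positivity
    have hz2 : a / (a + b) < 1 := by rw [div_lt_one hab]; linarith
    have h := heq (a + b) hab (a / (a + b)) hz1 hz2
    have e1 : (a + b) * (a / (a + b)) = a := by field_simp
    have e2 : (1 - a / (a + b)) = b / (a + b) := by field_simp; ring
    have e3 : (1 - a / (a + b)) / (a / (a + b)) = b / a := by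
      rw [e2]; field_simp
    rw [e1, e3, e2] at h
    exact h
  -- f x ≤ x for all x > 0
  have hle : ∀ a : ℝ, 0 < a → f a ≤ a := by
    intro a ha
    by_contra h
    push_neg at h
    have hd : 0 < f a - a := by linarith
    set b := a ^ 2 / (f a - a) with hbs
    have hb : 0 < b := by positivity
    have key : f a * (b / a) = a + b := by
      rw [hbs]; field_simp; ring
    have h2 := star a b ha hb
    rw [key] at h2
    have hfw := hpos _ (by linarith : (0:ℝ) < a + b)
    have hlt : b / (a + b) < 1 := by rw [div_lt_one (by linarith)]; linarith
    nlinarith [h2]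
  -- period: f (u₀ + w) * w = f w * (u₀ + w)
  have hper : ∀ w : ℝ, 0 < w → f (u₀ + w) * w = f w * (u₀ + w) := by
    intro w hw
    have h := star u₀ w hu₀ hw
    rw [hfix] at h
    have e : u₀ * (w / u₀) = w := by field_simp
    rw [e] at h
    have hpos' : (0:ℝ) < u₀ + w := by linarith
    field_simp at h
    linarith [h]
  -- monotone: f (y+u) * y ≤ f y * (y + u)
  have hmono : ∀ y u : ℝ, 0 < y → 0 < u → f (y + u) * y ≤ f y * (y + u) := by
    intro y u hy hu
    have h := star y u hy hu
    have hb : f (f y * (u / y)) ≤ f y * (u / y) :=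
      hle _ (mul_pos (hpos y hy) (by positivity))
    have h4 : (u / (y + u)) * f (y + u) ≤ f y * (u / y) := by
      rw [h]; exact hb
    rw [div_mul_eq_mul_div, ← mul_div_assoc,
      div_le_div_iff₀ (by positivity) hy] at h4
    nlinarith [h4]
  -- f (n u₀) = n u₀
  have hn : ∀ n : ℕ, f ((n + 1) * u₀) = (n + 1) * u₀ := by
    intro n
    induction n with
    | zero => simpa using hfix
    | succ m ih =>
      have hw : (0:ℝ) < ((m:ℝ) + 1) * u₀ := by positivity
      have h := hper _ hw
      rw [ih] at h
      have e : u₀ + ((m:ℝ) + 1) * u₀ = ((m:ℝ) + 1 + 1) * u₀ := by ring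
      rw [e] at h
      have h' : f (((m:ℝ) + 1 + 1) * u₀) * (((m:ℝ) + 1) * u₀)
          = (((m:ℝ) + 1 + 1) * u₀) * (((m:ℝ) + 1) * u₀) := by rw [h]; ring
      have := mul_right_cancel₀ (ne_of_gt hw) h'
      push_cast
      linarith [this]
  intro x hx
  obtain ⟨n, hnlt⟩ := exists_nat_gt (x / u₀)
  have hxn : x < (n + 1 : ℝ) * u₀ := by
    have : x / u₀ < (n:ℝ) + 1 := by push_cast at hnlt ⊢; linarith
    calc x = (x / u₀) * u₀ := by field_simp
    _ < ((n:ℝ) + 1) * u₀ := by exact mul_lt_mul_of_pos_right this hu₀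
  set u := ((n:ℝ) + 1) * u₀ - x with hus
  have hu : 0 < u := by rw [hus]; linarith
  have h := hmono x u hx hu
  have e : x + u = ((n:ℝ) + 1) * u₀ := by rw [hus]; ring
  rw [e, hn n] at h
  have hx' : x ≤ f x := by
    have hp : (0:ℝ) < ((n:ℝ) + 1) * u₀ := by positivity
    nlinarith [h]
  exact le_antisymm (hle x hx) hx'
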